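/- Spectral gap of the Johnson graph: let n be even and j ∈ ℕ with η := j/n ≤ 1/10. Then every nonzero eigenvalue of the normalized Laplacian L̃ = I - A/d of the Johnson graph J(n, n/2, j) is at least η/2; equivalently, the second-smallest eigenvalue μ̃₂ satisfies μ̃₂ ≥ η/2. -/

import Mathlib

open Finset

section JohnsonAux

variable {α : Type*} [DecidableEq α]

lemma js_sdiff_card {A B : Finset α} {k j : ℕ} (hA : A.card = k) (hB : B.card = k)
    (h : (symmDiff A B).card = 2*j) : (A\B).card = j ∧ (B\A).card = j := by
  have hs : symmDiff A B = (A \ B) ∪ (B \ A) := by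
    ext c; simp [mem_symmDiff]; try tauto
  have hdisj : Disjoint (A \ B) (B \ A) := disjoint_sdiff_sdiff
  rw [hs, card_union_of_disjoint hdisj] at h
  have h1 := card_inter_add_card_sdiff A B
  have h2 := card_inter_add_card_sdiff B A
  rw [inter_comm] at h2
  omega

lemma js_recover (u x : Finset α) : (x \ (x \ u)) ∪ (u \ x) = u := by
  ext c; simp; tauto

lemma js_mem_image_swap (a b c : α) (u : Finset α) :
    c ∈ u.image (Equiv.swap a b) ↔ Equiv.swap a b c ∈ u := by
  constructor
  · rw [mem_image]; rintro ⟨x, hx, rfl⟩; simpa using hx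
  · intro h; exact mem_image.mpr ⟨_, h, by simp⟩

lemma js_swap_fix {a b : α} {u : Finset α} (h : a ∈ u ↔ b ∈ u) :
    u.image (Equiv.swap a b) = u := by
  ext c
  rw [js_mem_image_swap]
  rcases eq_or_ne c a with rfl | hca
  · simp [Equiv.swap_apply_left]; tauto
  · rcases eq_or_ne c b with rfl | hcb
    · simp [Equiv.swap_apply_right]; tauto
    · rw [Equiv.swap_apply_of_ne_of_ne hca hcb]

lemma js_swap_symmDiff {a b : α} (hab : a ≠ b) {u : Finset α} (h : ¬(a ∈ u ↔ b ∈ u)) :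
    symmDiff u (u.image (Equiv.swap a b)) = {a, b} := by
  ext c
  rw [mem_symmDiff, js_mem_image_swap, mem_insert, mem_singleton]
  rcases eq_or_ne c a with rfl | hca
  · simp [Equiv.swap_apply_left]; tauto
  · rcases eq_or_ne c b with rfl | hcb
    · simp [Equiv.swap_apply_right]; tauto
    · rw [Equiv.swap_apply_of_ne_of_ne hca hcb]; tauto

lemma js_regular [Fintype α] {k j : ℕ} (hjk : j ≤ k) (A : Finset α) (hA : A.card = k)
    (hAc : Aᶜ.card = k) :
    (univ.filter (fun u : {B : Finset α // B.card = k} =>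
      (symmDiff u.1 A).card = 2*j)).card = (k.choose j)^2 := by
  have htarget : ((powersetCard j A) ×ˢ (powersetCard j Aᶜ)).card = (k.choose j)^2 := by
    rw [card_product, card_powersetCard, card_powersetCard, hA, hAc, sq]
  rw [← htarget]
  refine Finset.card_bij' (fun u _ => (A \ u.1, u.1 \ A))
    (fun p hp => (⟨(A \ p.1) ∪ p.2, ?_⟩ : {B : Finset α // B.card = k})) ?_ ?_ ?_ ?_
  · simp only [mem_product, mem_powersetCard] at hp
    obtain ⟨⟨hS, hSc⟩, hS', hS'c⟩ := hp
    have hdisj : Disjoint (A \ p.1) p.2 := by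
      refine disjoint_left.mpr fun c hc hc2 => ?_
      have := hS' hc2; rw [mem_compl] at this; exact this (mem_sdiff.mp hc).1
    rw [card_union_of_disjoint hdisj, card_sdiff_of_subset hS, hA, hSc, hS'c]; omega
  · intro u hu
    simp only [mem_filter, mem_univ, true_and] at hu
    obtain ⟨h1, h2⟩ := js_sdiff_card hA u.2 (by rwa [symmDiff_comm])
    simp only [mem_product, mem_powersetCard]
    refine ⟨⟨sdiff_subset, h1⟩, fun c hc => ?_, h2⟩
    rw [mem_compl]; exact (mem_sdiff.mp hc).2
  · intro p hp
    simp only [mem_product, mem_powersetCard] at hp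
    obtain ⟨⟨hS, hSc⟩, hS', hS'c⟩ := hp
    simp only [mem_filter, mem_univ, true_and]
    have hS1 : ∀ c, c ∈ p.1 → c ∈ A := fun c h => hS h
    have hS2 : ∀ c, c ∈ p.2 → c ∉ A := fun c h => mem_compl.mp (hS' h)
    have hAs : symmDiff ((A \ p.1) ∪ p.2) A = p.1 ∪ p.2 := by
      ext c
      simp only [mem_symmDiff, mem_union, mem_sdiff]
      have := hS1 c; have := hS2 c; tauto
    rw [hAs, card_union_of_disjoint, hSc, hS'c]; · omega
    refine disjoint_left.mpr fun c hc hc2 => (mem_compl.mp (hS' hc2)) (hS hc)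
  · intro u hu
    simp only [mem_filter, mem_univ, true_and] at hu
    exact Subtype.ext (js_recover u.1 A)
  · intro p hp
    simp only [mem_product, mem_powersetCard] at hp
    obtain ⟨⟨hS, hSc⟩, hS', hS'c⟩ := hp
    have hS1 : ∀ c, c ∈ p.1 → c ∈ A := fun c h => hS h
    have hS2 : ∀ c, c ∈ p.2 → c ∉ A := fun c h => mem_compl.mp (hS' h)
    have e1 : A \ ((A \ p.1) ∪ p.2) = p.1 := by
      ext c
      simp only [mem_sdiff, mem_union, not_or, not_and, not_not]
      have := hS1 c; have := hS2 c; tauto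
    have e2 : ((A \ p.1) ∪ p.2) \ A = p.2 := by
      ext c
      simp only [mem_sdiff, mem_union]
      have := hS1 c; have := hS2 c; tauto
    simp only [e1, e2]

lemma js_moving_le [Fintype α] {k j : ℕ} (hj1 : 1 ≤ j) (hjk : j ≤ k)
    {A : Finset α} (hA : A.card = k) (hAc : Aᶜ.card = k) {a b : α}
    (ha : a ∈ A) (hb : b ∉ A) :
    (univ.filter (fun u : {B : Finset α // B.card = k} =>
        (symmDiff u.1 A).card = 2*j ∧ ¬(a ∈ u.1 ↔ b ∈ u.1))).card
      ≤ ((k-1).choose j)^2 + ((k-1).choose (j-1))^2 := by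
  classical
  set V := {B : Finset α // B.card = k}
  have hsub : (univ.filter (fun u : V => (symmDiff u.1 A).card = 2*j ∧ ¬(a ∈ u.1 ↔ b ∈ u.1)))
      ⊆ (univ.filter (fun u : V => (symmDiff u.1 A).card = 2*j ∧ a ∈ u.1 ∧ b ∉ u.1))
        ∪ (univ.filter (fun u : V => (symmDiff u.1 A).card = 2*j ∧ a ∉ u.1 ∧ b ∈ u.1)) := by
    intro u hu
    simp only [mem_filter, mem_univ, true_and, mem_union] at hu ⊢
    tauto
  refine le_trans (le_trans (card_le_card hsub) (card_union_le _ _)) (Nat.add_le_add ?_ ?_)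
  · have htarget : ((powersetCard j (A.erase a)) ×ˢ (powersetCard j (Aᶜ.erase b))).card
        = ((k-1).choose j)^2 := by
      rw [card_product, card_powersetCard, card_powersetCard, card_erase_of_mem ha,
        card_erase_of_mem (mem_compl.mpr hb), hA, hAc, sq]
    rw [← htarget]
    refine card_le_card_of_injOn (fun u => (A \ u.1, u.1 \ A)) ?_ ?_
    · intro u hu
      simp only [mem_coe, mem_filter, mem_univ, true_and] at hu
      obtain ⟨hcard, hau, hbu⟩ := hu
      obtain ⟨h1, h2⟩ := js_sdiff_card hA u.2 (by rwa [symmDiff_comm])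
      simp only [mem_coe, mem_product, mem_powersetCard]
      refine ⟨⟨fun c hc => ?_, h1⟩, fun c hc => ?_, h2⟩
      · rw [mem_sdiff] at hc
        exact mem_erase.mpr ⟨fun h => hc.2 (h ▸ hau), hc.1⟩
      · rw [mem_sdiff] at hc
        exact mem_erase.mpr ⟨fun h => hbu (h ▸ hc.1), mem_compl.mpr hc.2⟩
    · intro u hu v hv huv
      simp only [Prod.mk.injEq] at huv
      apply Subtype.ext
      rw [← js_recover u.1 A, ← js_recover v.1 A, huv.1, huv.2]
  · have htarget : ((powersetCard (j-1) (A.erase a)) ×ˢ (powersetCard (j-1) (Aᶜ.erase b))).card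
        = ((k-1).choose (j-1))^2 := by
      rw [card_product, card_powersetCard, card_powersetCard, card_erase_of_mem ha,
        card_erase_of_mem (mem_compl.mpr hb), hA, hAc, sq]
    rw [← htarget]
    refine card_le_card_of_injOn (fun u => ((A \ u.1).erase a, (u.1 \ A).erase b)) ?_ ?_
    · intro u hu
      simp only [mem_coe, mem_filter, mem_univ, true_and] at hu
      obtain ⟨hcard, hau, hbu⟩ := hu
      obtain ⟨h1, h2⟩ := js_sdiff_card hA u.2 (by rwa [symmDiff_comm])
      have haAu : a ∈ A \ u.1 := mem_sdiff.mpr ⟨ha, hau⟩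
      have hbuA : b ∈ u.1 \ A := mem_sdiff.mpr ⟨hbu, hb⟩
      simp only [mem_coe, mem_product, mem_powersetCard]
      refine ⟨⟨fun c hc => ?_, by rw [card_erase_of_mem haAu, h1]⟩,
        fun c hc => ?_, by rw [card_erase_of_mem hbuA, h2]⟩
      · rw [mem_erase, mem_sdiff] at hc
        exact mem_erase.mpr ⟨hc.1, hc.2.1⟩
      · rw [mem_erase, mem_sdiff] at hc
        exact mem_erase.mpr ⟨hc.1, mem_compl.mpr hc.2.2⟩
    · intro u hu v hv huv
      simp only [Finset.coe_filter, Set.mem_setOf_eq, mem_univ, true_and] at hu hv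
      simp only [Prod.mk.injEq] at huv
      have haAu : a ∈ A \ u.1 := mem_sdiff.mpr ⟨ha, hu.2.1⟩
      have hbuA : b ∈ u.1 \ A := mem_sdiff.mpr ⟨hu.2.2, hb⟩
      have haAv : a ∈ A \ v.1 := mem_sdiff.mpr ⟨ha, hv.2.1⟩
      have hbvA : b ∈ v.1 \ A := mem_sdiff.mpr ⟨hv.2.2, hb⟩
      have e1 : A \ u.1 = A \ v.1 := by
        rw [← insert_erase haAu, ← insert_erase haAv, huv.1]
      have e2 : u.1 \ A = v.1 \ A := by
        rw [← insert_erase hbuA, ← insert_erase hbvA, huv.2]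
      apply Subtype.ext
      rw [← js_recover u.1 A, ← js_recover v.1 A, e1, e2]

lemma js_connected {k : ℕ} (f : {B : Finset α // B.card = k} → ℝ)
    (h : ∀ x y : {B : Finset α // B.card = k}, (symmDiff x.1 y.1).card = 2 → f x = f y)
    (x y : {B : Finset α // B.card = k}) : f x = f y := by
  suffices H : ∀ m (x y : {B : Finset α // B.card = k}), (symmDiff x.1 y.1).card = m → f x = f y by
    exact H _ x y rfl
  intro m
  induction m using Nat.strong_induction_on with
  | _ m ih =>
    intro x y hm
    rcases eq_or_ne x y with rfl | hxy
    · rfl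
    have hxyne : x.1 ≠ y.1 := fun hc => hxy (Subtype.ext hc)
    have hxs : (x.1 \ y.1).Nonempty := by
      rw [sdiff_nonempty]
      exact fun hc => hxyne (eq_of_subset_of_card_le hc (by rw [x.2, y.2]))
    have hys : (y.1 \ x.1).Nonempty := by
      rw [sdiff_nonempty]
      exact fun hc => hxyne (eq_of_subset_of_card_le hc (by rw [x.2, y.2])).symm
    obtain ⟨a, ha⟩ := hxs
    obtain ⟨b, hb⟩ := hys
    rw [mem_sdiff] at ha hb
    obtain ⟨hax, hay⟩ := ha
    obtain ⟨hby, hbx⟩ := hb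
    have hab : a ≠ b := fun hc => hbx (hc ▸ hax)
    have hk1 : 1 ≤ k := by
      have hx2 := x.2
      rw [← hx2]
      exact card_pos.mpr ⟨a, hax⟩
    have hz : (insert b (x.1.erase a)).card = k := by
      rw [card_insert_of_notMem (fun hc => hbx (mem_erase.mp hc).2),
        card_erase_of_mem hax, x.2]
      omega
    set z : {B : Finset α // B.card = k} := ⟨insert b (x.1.erase a), hz⟩ with hzdef
    have h1 : symmDiff x.1 z.1 = {a, b} := by
      ext c
      simp only [hzdef, mem_symmDiff, mem_insert, mem_erase, mem_singleton]
      rcases eq_or_ne c a with rfl | hca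
      · simp [hab, hax]
      · rcases eq_or_ne c b with rfl | hcb
        · simp [hbx]
        · simp [hca, hcb]
    have h2 : symmDiff z.1 y.1 = ((symmDiff x.1 y.1).erase a).erase b := by
      ext c
      simp only [hzdef, mem_symmDiff, mem_insert, mem_erase]
      rcases eq_or_ne c a with rfl | hca
      · simp [hab, hay]
      · rcases eq_or_ne c b with rfl | hcb
        · simp [hby]
        · simp [hca, hcb]
    have hmem : a ∈ symmDiff x.1 y.1 := by simp [mem_symmDiff, hax, hay]
    have hmem2 : b ∈ (symmDiff x.1 y.1).erase a := by
      simp [mem_erase, mem_symmDiff, hby, hbx, Ne.symm hab]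
    have hcard2 : (symmDiff z.1 y.1).card = m - 2 := by
      rw [h2, card_erase_of_mem hmem2, card_erase_of_mem hmem, hm]
      omega
    have hmge : 2 ≤ m := by
      have hsub : ({a, b} : Finset α) ⊆ symmDiff x.1 y.1 := by
        intro c hc
        rcases mem_insert.mp hc with rfl | hc
        · exact hmem
        · rw [mem_singleton] at hc; subst hc
          simp [mem_symmDiff, hby, hbx]
      have := card_le_card hsub
      rwa [card_pair hab, hm] at this
    have step1 : f x = f z := h x z (by rw [h1, card_pair hab])
    have step2 : f z = f y := ih (m - 2) (by omega) z y hcard2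
    rw [step1, step2]

lemma js_key {k j : ℕ} (hj1 : 1 ≤ j) (h5 : 5*j ≤ k) :
    (j:ℝ) * ((k.choose j : ℝ))^2
      + 4*(k:ℝ)*(((k-1).choose j : ℝ)^2 + ((k-1).choose (j-1) : ℝ)^2)
      ≤ 4*(k:ℝ)*((k.choose j : ℝ))^2 := by
  have hjk : j ≤ k := by omega
  have hk1 : 1 ≤ k := by omega
  have e1n : k * ((k-1).choose (j-1)) = (k.choose j) * j := by
    have h := Nat.add_one_mul_choose_eq (k-1) (j-1)
    rwa [show k-1+1 = k by omega, show j-1+1 = j by omega] at h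
  have e2n : k.choose j = (k-1).choose (j-1) + (k-1).choose j := by
    have h := Nat.choose_succ_succ (k-1) (j-1)
    simp only [Nat.succ_eq_add_one] at h
    rwa [show k-1+1 = k by omega, show j-1+1 = j by omega] at h
  have e1 : (k:ℝ) * ((k-1).choose (j-1) : ℝ) = ((k.choose j : ℕ) : ℝ) * (j:ℝ) := by
    exact_mod_cast congrArg (Nat.cast : ℕ → ℝ) e1n
  have e2 : ((k.choose j : ℕ) : ℝ) = ((k-1).choose (j-1) : ℝ) + ((k-1).choose j : ℝ) := by
    exact_mod_cast congrArg (Nat.cast : ℕ → ℝ) e2n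
  have hCpos : (1:ℝ) ≤ ((k.choose j : ℕ) : ℝ) := by
    exact_mod_cast Nat.choose_pos hjk
  have hjR : (1:ℝ) ≤ (j:ℝ) := by exact_mod_cast hj1
  have h5R : 5*(j:ℝ) ≤ (k:ℝ) := by exact_mod_cast h5
  set c1 : ℝ := ((k-1).choose (j-1) : ℝ)
  set c2 : ℝ := ((k-1).choose j : ℝ)
  set C : ℝ := ((k.choose j : ℕ) : ℝ)
  have hc1n : (0:ℝ) ≤ c1 := by positivity
  have hc2n : (0:ℝ) ≤ c2 := by positivity
  have h5c : 5*c1 ≤ C := by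
    have h1 : 5*(j:ℝ)*c1 ≤ (k:ℝ)*c1 := by nlinarith
    rw [e1] at h1
    nlinarith
  have h8 : C ≤ 8*c2 := by linarith
  have sq2k : 4*(k:ℝ)*C^2 = 4*(k:ℝ)*c1^2 + 8*(k:ℝ)*c1*c2 + 4*(k:ℝ)*c2^2 := by
    rw [e2]; ring
  have e1c2 : (k:ℝ)*c1*c2 = C*(j:ℝ)*c2 := by rw [e1]
  have P : 0 ≤ ((j:ℝ)*C)*(8*c2 - C) := by
    apply mul_nonneg (by positivity) (by linarith)
  linarith [sq2k, e1c2, P]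

end JohnsonAux

set_option maxHeartbeats 1000000 in
/-- Spectral gap of the Johnson graph `J(n, n/2, j)`: let `n` be even and positive, and
`j ∈ ℕ` with `η := j/n ≤ 1/10`. Then every nonzero eigenvalue of the normalized Laplacian
`L̃ = I - A/d` (where `d = binom(n/2, j)²`) is at least `η/2`. -/
theorem johnson_spectral_gap (n j : ℕ) (hn : Even n) (hnpos : 0 < n)
    (hη : (j : ℝ) / n ≤ 1 / 10)
    (d : ℕ) (hd : d = ((n / 2).choose j) ^ 2)
    (μ : ℝ) (f : {A : Finset (Fin n) // A.card = n / 2} → ℝ) (hf : f ≠ 0)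
    (heig : ∀ v : {A : Finset (Fin n) // A.card = n / 2},
      f v - (1 / (d : ℝ)) *
        ∑ u ∈ Finset.univ.filter
          (fun u : {A : Finset (Fin n) // A.card = n / 2} =>
            (symmDiff u.1 v.1).card = 2 * j), f u
      = μ * f v) :
    μ = 0 ∨ (j : ℝ) / n / 2 ≤ μ := by
  classical
  obtain ⟨v₀, hv₀⟩ : ∃ v, f v ≠ 0 := by
    by_contra hcon; push_neg at hcon; exact hf (funext hcon)
  have hn2 : 2 * (n/2) = n := Nat.two_mul_div_two_of_even hn
  by_cases hj0 : j = 0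
  · left
    subst hj0
    have h := heig v₀
    have hfil : Finset.univ.filter (fun u : {A : Finset (Fin n) // A.card = n/2} =>
        (symmDiff u.1 v₀.1).card = 2*0) = {v₀} := by
      ext u
      simp only [mem_filter, mem_univ, true_and, mem_singleton, Nat.mul_zero, card_eq_zero]
      rw [← Finset.bot_eq_empty, symmDiff_eq_bot]
      constructor
      · intro hh; exact Subtype.ext hh
      · rintro rfl; rfl
    rw [hfil, sum_singleton, hd] at h
    simp only [Nat.choose_zero_right, one_pow, Nat.cast_one, div_one, one_mul] at h
    have : μ * f v₀ = 0 := by linarith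
    rcases mul_eq_zero.mp this with h' | h'
    · exact h'
    · exact absurd h' hv₀
  · have hj1 : 1 ≤ j := Nat.one_le_iff_ne_zero.mpr hj0
    have h10 : 10 * j ≤ n := by
      have hn0 : (0:ℝ) < n := by exact_mod_cast hnpos
      have h' : (10 * j : ℝ) ≤ n := by
        rw [div_le_div_iff₀ hn0 (by norm_num : (0:ℝ) < 10)] at hη
        linarith
      exact_mod_cast h'
    have h5 : 5 * j ≤ n/2 := by omega
    have hjk : j ≤ n/2 := by omega
    have hChoose : 0 < (n/2).choose j := Nat.choose_pos hjk
    have hdpos : 0 < d := by rw [hd]; positivity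
    have hdR : (0:ℝ) < d := by exact_mod_cast hdpos
    have hAc : ∀ A : Finset (Fin n), A.card = n/2 → Aᶜ.card = n/2 := by
      intro A hA; rw [card_compl, Fintype.card_fin, hA]; omega
    by_cases hconst : ∀ u v : {A : Finset (Fin n) // A.card = n / 2}, f u = f v
    · left
      have h := heig v₀
      have hsum : ∑ u ∈ Finset.univ.filter
          (fun u : {A : Finset (Fin n) // A.card = n / 2} =>
            (symmDiff u.1 v₀.1).card = 2 * j), f u
          = (d : ℝ) * f v₀ := by
        rw [Finset.sum_congr rfl (fun u _ => hconst u v₀), Finset.sum_const, nsmul_eq_mul,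
          js_regular hjk v₀.1 v₀.2 (hAc _ v₀.2), hd]
        try push_cast
        try ring
      rw [hsum] at h
      have hcancel : (1 / (d:ℝ)) * ((d:ℝ) * f v₀) = f v₀ := by
        field_simp
      rw [hcancel] at h
      have : μ * f v₀ = 0 := by linarith
      rcases mul_eq_zero.mp this with h' | h'
      · exact h'
      · exact absurd h' hv₀
    · right
      push_neg at hconst
      obtain ⟨u₁, v₁, huv⟩ := hconst
      have hpair : ∃ p : {A : Finset (Fin n) // A.card = n / 2} × {A : Finset (Fin n) // A.card = n / 2},
          (symmDiff p.1.1 p.2.1).card = 2 ∧ f p.1 ≠ f p.2 := by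
        by_contra hcon
        push_neg at hcon
        exact huv (js_connected f (fun x y hxy => hcon (x, y) hxy) u₁ v₁)
      obtain ⟨q, hq2, hqne⟩ := hpair
      have hqPS : q ∈ Finset.univ.filter
          (fun p : {A : Finset (Fin n) // A.card = n / 2} × {A : Finset (Fin n) // A.card = n / 2} =>
            (symmDiff p.1.1 p.2.1).card = 2) := by
        simp [hq2]
      obtain ⟨p₀, hp₀PS, hp₀max⟩ := Finset.exists_max_image _ (fun p => |f p.1 - f p.2|) ⟨q, hqPS⟩
      have hp₀2 : (symmDiff p₀.1.1 p₀.2.1).card = 2 := (mem_filter.mp hp₀PS).2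
      have hLpos : 0 < |f p₀.1 - f p₀.2| :=
        lt_of_lt_of_le (abs_pos.mpr (sub_ne_zero.mpr hqne)) (hp₀max q hqPS)
      obtain ⟨h1c, h2c⟩ := js_sdiff_card (j := 1) p₀.1.2 p₀.2.2 (by simpa using hp₀2)
      obtain ⟨a, haeq⟩ := card_eq_one.mp h1c
      obtain ⟨b, hbeq⟩ := card_eq_one.mp h2c
      have hax : a ∈ p₀.1.1 ∧ a ∉ p₀.2.1 := by
        rw [← mem_sdiff, haeq]; exact mem_singleton_self a
      have hbx : b ∈ p₀.2.1 ∧ b ∉ p₀.1.1 := by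
        rw [← mem_sdiff, hbeq]; exact mem_singleton_self b
      have hab : a ≠ b := fun hc => hax.2 (hc ▸ hbx.1)
      have hyx : p₀.2.1 = p₀.1.1.image (Equiv.swap a b) := by
        ext c
        rw [js_mem_image_swap]
        rcases eq_or_ne c a with rfl | hca
        · rw [Equiv.swap_apply_left]
          exact iff_of_false hax.2 hbx.2
        · rcases eq_or_ne c b with rfl | hcb
          · rw [Equiv.swap_apply_right]
            exact iff_of_true hbx.1 hax.1
          · rw [Equiv.swap_apply_of_ne_of_ne hca hcb]
            have h1 : c ∉ p₀.1.1 \ p₀.2.1 := by rw [haeq, mem_singleton]; exact hca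
            have h2 : c ∉ p₀.2.1 \ p₀.1.1 := by rw [hbeq, mem_singleton]; exact hcb
            rw [mem_sdiff] at h1 h2
            constructor
            · intro hc; by_contra hc2; exact h2 ⟨hc, hc2⟩
            · intro hc; by_contra hc2; exact h1 ⟨hc, hc2⟩
      have hswinj : Function.Injective (Equiv.swap a b) := Equiv.injective _
      have himg : ∀ u : {A : Finset (Fin n) // A.card = n / 2},
          (u.1.image (Equiv.swap a b)).card = n / 2 :=
        fun u => by rw [card_image_of_injective _ hswinj, u.2]
      set g : {A : Finset (Fin n) // A.card = n / 2} → {A : Finset (Fin n) // A.card = n / 2} :=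
        fun u => ⟨u.1.image (Equiv.swap a b), himg u⟩ with hg
      have hswinv : ∀ s : Finset (Fin n), (s.image (Equiv.swap a b)).image (Equiv.swap a b) = s := by
        intro s
        rw [Finset.image_image]
        have hid : ((Equiv.swap a b : Fin n → Fin n) ∘ (Equiv.swap a b : Fin n → Fin n)) = id := by
          funext c; simp [Equiv.swap_apply_self]
        rw [hid, Finset.image_id]
      have hgg : ∀ u, g (g u) = u := fun u => Subtype.ext (hswinv u.1)
      have hxy' : p₀.1.1 = p₀.2.1.image (Equiv.swap a b) := by rw [hyx, hswinv]
      have hsum : ∑ u ∈ Finset.univ.filter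
            (fun u : {A : Finset (Fin n) // A.card = n / 2} =>
              (symmDiff u.1 p₀.2.1).card = 2 * j), f u
          = ∑ u ∈ Finset.univ.filter
            (fun u : {A : Finset (Fin n) // A.card = n / 2} =>
              (symmDiff u.1 p₀.1.1).card = 2 * j), f (g u) := by
        refine Finset.sum_bij' (fun u _ => g u) (fun u _ => g u) ?_ ?_ ?_ ?_ ?_
        · intro u hu
          simp only [mem_filter, mem_univ, true_and] at hu ⊢
          show (symmDiff (u.1.image (Equiv.swap a b)) p₀.1.1).card = 2 * j
          rw [hxy', ← Finset.image_symmDiff _ _ hswinj, card_image_of_injective _ hswinj]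
          exact hu
        · intro u hu
          simp only [mem_filter, mem_univ, true_and] at hu ⊢
          show (symmDiff (u.1.image (Equiv.swap a b)) p₀.2.1).card = 2 * j
          rw [hyx, ← Finset.image_symmDiff _ _ hswinj, card_image_of_injective _ hswinj]
          exact hu
        · intro u _; exact hgg u
        · intro u _; exact hgg u
        · intro u _; rw [hgg u]
      have h1 := heig p₀.1
      have h2 := heig p₀.2
      have hmain : (1 - μ) * (f p₀.1 - f p₀.2)
          = (1/(d:ℝ)) * ∑ u ∈ Finset.univ.filter
              (fun u : {A : Finset (Fin n) // A.card = n / 2} =>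
                (symmDiff u.1 p₀.1.1).card = 2 * j), (f u - f (g u)) := by
        rw [Finset.sum_sub_distrib, ← hsum]
        ring_nf
        ring_nf at h1 h2
        linarith [h1, h2]
      have hfixzero : ∀ u : {A : Finset (Fin n) // A.card = n / 2},
          (a ∈ u.1 ↔ b ∈ u.1) → f u - f (g u) = 0 := by
        intro u h
        rw [show g u = u from Subtype.ext (js_swap_fix h)]
        ring
      have hmov : ∀ u : {A : Finset (Fin n) // A.card = n / 2},
          ¬(a ∈ u.1 ↔ b ∈ u.1) → |f u - f (g u)| ≤ |f p₀.1 - f p₀.2| := by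
        intro u h
        refine hp₀max (u, g u) ?_
        simp only [mem_filter, mem_univ, true_and]
        show (symmDiff u.1 (u.1.image (Equiv.swap a b))).card = 2
        rw [js_swap_symmDiff hab h, card_pair hab]
      have hsplit : ∑ u ∈ Finset.univ.filter
            (fun u : {A : Finset (Fin n) // A.card = n / 2} =>
              (symmDiff u.1 p₀.1.1).card = 2 * j), (f u - f (g u))
          = ∑ u ∈ (Finset.univ.filter
            (fun u : {A : Finset (Fin n) // A.card = n / 2} =>
              (symmDiff u.1 p₀.1.1).card = 2 * j)).filter
                (fun u => ¬(a ∈ u.1 ↔ b ∈ u.1)), (f u - f (g u)) := by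
        refine (Finset.sum_filter_of_ne ?_).symm
        intro u _ hne
        exact fun hiff => hne (hfixzero u hiff)
      have hcardle : ((Finset.univ.filter
            (fun u : {A : Finset (Fin n) // A.card = n / 2} =>
              (symmDiff u.1 p₀.1.1).card = 2 * j)).filter
                (fun u => ¬(a ∈ u.1 ↔ b ∈ u.1))).card
          ≤ ((n/2-1).choose j)^2 + ((n/2-1).choose (j-1))^2 := by
        rw [filter_filter]
        exact js_moving_le hj1 hjk p₀.1.2 (hAc _ p₀.1.2) hax.1 hbx.2
      have habs : |∑ u ∈ Finset.univ.filter
            (fun u : {A : Finset (Fin n) // A.card = n / 2} =>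
              (symmDiff u.1 p₀.1.1).card = 2 * j), (f u - f (g u))|
          ≤ ((((n/2-1).choose j)^2 + ((n/2-1).choose (j-1))^2 : ℕ) : ℝ) * |f p₀.1 - f p₀.2| := by
        rw [hsplit]
        refine le_trans (Finset.abs_sum_le_sum_abs _ _) ?_
        refine le_trans (Finset.sum_le_sum (fun u hu => hmov u (mem_filter.mp hu).2)) ?_
        rw [Finset.sum_const, nsmul_eq_mul]
        exact mul_le_mul_of_nonneg_right (by exact_mod_cast hcardle) (abs_nonneg _)
      have h1L : |1 - μ| * |f p₀.1 - f p₀.2|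
          ≤ ((((n/2-1).choose j)^2 + ((n/2-1).choose (j-1))^2 : ℕ) : ℝ) / (d:ℝ)
            * |f p₀.1 - f p₀.2| := by
        calc |1 - μ| * |f p₀.1 - f p₀.2| = |(1 - μ) * (f p₀.1 - f p₀.2)| := (abs_mul _ _).symm
          _ = |(1/(d:ℝ)) * ∑ u ∈ Finset.univ.filter
              (fun u : {A : Finset (Fin n) // A.card = n / 2} =>
                (symmDiff u.1 p₀.1.1).card = 2 * j), (f u - f (g u))| := by rw [hmain]
          _ = (1/(d:ℝ)) * |∑ u ∈ Finset.univ.filter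
              (fun u : {A : Finset (Fin n) // A.card = n / 2} =>
                (symmDiff u.1 p₀.1.1).card = 2 * j), (f u - f (g u))| := by
            rw [abs_mul, abs_of_nonneg (by positivity : (0:ℝ) ≤ 1/(d:ℝ))]
          _ ≤ (1/(d:ℝ)) * (((((n/2-1).choose j)^2 + ((n/2-1).choose (j-1))^2 : ℕ) : ℝ)
              * |f p₀.1 - f p₀.2|) := by
            exact mul_le_mul_of_nonneg_left habs (by positivity)
          _ = ((((n/2-1).choose j)^2 + ((n/2-1).choose (j-1))^2 : ℕ) : ℝ) / (d:ℝ)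
              * |f p₀.1 - f p₀.2| := by ring
      have h1μ : |1 - μ| ≤ ((((n/2-1).choose j)^2 + ((n/2-1).choose (j-1))^2 : ℕ) : ℝ) / (d:ℝ) :=
        le_of_mul_le_mul_right h1L hLpos
      have h1μ' : 1 - μ ≤ ((((n/2-1).choose j)^2 + ((n/2-1).choose (j-1))^2 : ℕ) : ℝ) / (d:ℝ) :=
        le_trans (le_abs_self _) h1μ
      have hMd : (1 - μ) * (d:ℝ) ≤ ((((n/2-1).choose j)^2 + ((n/2-1).choose (j-1))^2 : ℕ) : ℝ) := by
        have hh := mul_le_mul_of_nonneg_right h1μ' hdR.le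
        rwa [div_mul_cancel₀ _ (ne_of_gt hdR)] at hh
      have hMd' : (1 - μ) * ((n/2).choose j : ℝ)^2
          ≤ ((n/2-1).choose j : ℝ)^2 + ((n/2-1).choose (j-1) : ℝ)^2 := by
        have hdC : (d:ℝ) = ((n/2).choose j : ℝ)^2 := by rw [hd]; push_cast; ring
        rw [← hdC]
        refine le_trans hMd ?_
        push_cast
        exact le_of_eq (by ring)
      have hkey := js_key (k := n/2) hj1 h5
      have hXpos : (0:ℝ) < ((n/2).choose j : ℝ)^2 := by
        have : (0:ℝ) < ((n/2).choose j : ℝ) := by exact_mod_cast hChoose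
        positivity
      have h4 : 4*((n/2:ℕ):ℝ)*((1-μ)*((n/2).choose j : ℝ)^2)
          ≤ 4*((n/2:ℕ):ℝ)*(((n/2-1).choose j : ℝ)^2 + ((n/2-1).choose (j-1) : ℝ)^2) :=
        mul_le_mul_of_nonneg_left hMd' (by positivity)
      have hjX : (j:ℝ)*((n/2).choose j : ℝ)^2
          ≤ (μ * (4 * ((n/2:ℕ):ℝ)))*((n/2).choose j : ℝ)^2 := by
        linarith only [h4, hkey]
      have hgoal : (j:ℝ) ≤ μ * (4 * ((n/2:ℕ):ℝ)) := le_of_mul_le_mul_right hjX hXpos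
      have hnR : (n:ℝ) = 2 * ((n/2:ℕ):ℝ) := by exact_mod_cast hn2.symm
      have hKpos : (0:ℝ) < ((n/2:ℕ):ℝ) := by
        exact_mod_cast (show 0 < n/2 by omega)
      rw [hnR, div_div, div_le_iff₀ (by linarith only [hKpos] : (0:ℝ) < 2 * ((n/2:ℕ):ℝ) * 2)]
      linarith only [hgoal]
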